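/- With $0<|x|<1$, $r>1$, $s=r+1$, $f_{i,j}(z)$ and $\Delta_1(z)$ as in the $\mathcal{W}_{q,t}(\mathfrak{sl}(2|1))$ setting, the fusion relation $f_{1,i}(z) f_{1,j}(x^{i+j} z) = f_{1,i+j}(x^j z)\, \Delta_1(x^i z)$ holds for all $i,j \geq 1$, as an identity of formal power series in $z$. -/

import Mathlib

set_option maxHeartbeats 1000000

/-- The q-integer with real index: `[a]_x = (x^a - x^{-a})/(x - x⁻¹)`. -/
noncomputable def qint (x a : ℝ) : ℝ := (x ^ a - x ^ (-a)) / (x - x⁻¹)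

/-- The structure function
`f_{i,j}(z) = exp(-∑_{m≥1} (1/m) [(r-1)m][rm][min(i,j)m][(s-max(i,j))m]/([m][sm]) (x-x⁻¹)² z^m)`
with `s = r+1`, as a function of `z` (convergent for small `‖z‖`). -/
noncomputable def ff (x r : ℝ) (i j : ℕ) (z : ℂ) : ℂ :=
  Complex.exp (-∑' m : ℕ,
    ((qint x ((r - 1) * (m + 1)) * qint x (r * (m + 1)) * qint x ((min i j : ℝ) * (m + 1)) *
        qint x ((r + 1 - (max i j : ℝ)) * (m + 1)) /
        (qint x ((m : ℝ) + 1) * qint x ((r + 1) * (m + 1))) * (x - x⁻¹) ^ 2 : ℝ) : ℂ)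
      * z ^ (m + 1) / ((m : ℂ) + 1))

/-- The rational function `Δ_i(z) = (1-x^{2r-i}z)(1-x^{-2r+i}z)/((1-x^i z)(1-x^{-i}z))`. -/
noncomputable def Dlt (x r : ℝ) (i : ℕ) (z : ℂ) : ℂ :=
  ((1 - ((x ^ (2 * r - (i : ℝ)) : ℝ) : ℂ) * z) * (1 - ((x ^ ((i : ℝ) - 2 * r) : ℝ) : ℂ) * z)) /
    ((1 - ((x ^ (i : ℝ) : ℝ) : ℂ) * z) * (1 - ((x ^ (-(i : ℝ)) : ℝ) : ℂ) * z))

/-! ### Auxiliary definitions and lemmas -/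

/-- The coefficient appearing in `ff x r 1 k`. -/
noncomputable def Fco (x r : ℝ) (k : ℕ) (m : ℕ) : ℝ :=
  qint x ((r - 1) * (m + 1)) * qint x (r * (m + 1)) * qint x ((min 1 k : ℝ) * (m + 1)) *
    qint x ((r + 1 - (max 1 k : ℝ)) * (m + 1)) /
    (qint x ((m : ℝ) + 1) * qint x ((r + 1) * (m + 1))) * (x - x⁻¹) ^ 2

/-- The coefficient appearing in the logarithmic expansion of `Δ₁`. -/
noncomputable def Dco (x r : ℝ) (m : ℕ) : ℝ :=
  x ^ ((2 * r - 1) * ((m : ℝ) + 1)) + x ^ ((1 - 2 * r) * ((m : ℝ) + 1))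
    - x ^ ((1 : ℝ) * ((m : ℝ) + 1)) - x ^ ((-1 : ℝ) * ((m : ℝ) + 1))

lemma ffL1 (y A S c : ℝ) (hy : y ≠ 0) (hA : A ≠ 0) (hS : S ≠ 0) (hc : c ≠ 0)
    (hy2 : y ^ 2 - 1 ≠ 0) (hQ2 : A ^ 2 * y ^ 2 - 1 ≠ 0) :
    (A / y - y / A) / c * ((A - A⁻¹) / c) * ((y - y⁻¹) / c) * ((A * y / S - S / (A * y)) / c) /
        ((y - y⁻¹) / c * ((A * y - (A * y)⁻¹) / c)) * c ^ 2
      = (A ^ 2 - y ^ 2) * (A ^ 2 - 1) * (A ^ 2 * y ^ 2 - S ^ 2)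
          / (A ^ 2 * y * S * (A ^ 2 * y ^ 2 - 1)) := by
  have h1 : A / y - y / A = (A ^ 2 - y ^ 2) / (A * y) := by field_simp
  have h2 : A - A⁻¹ = (A ^ 2 - 1) / A := by field_simp
  have h3 : y - y⁻¹ = (y ^ 2 - 1) / y := by field_simp
  have h4 : A * y / S - S / (A * y) = (A ^ 2 * y ^ 2 - S ^ 2) / (A * y * S) := by
    field_simp
  have h5 : A * y - (A * y)⁻¹ = (A ^ 2 * y ^ 2 - 1) / (A * y) := by field_simp
  rw [h1, h2, h3, h4, h5]
  field_simp

lemma ffL2 (y A B C : ℝ) (hy : y ≠ 0) (hA : A ≠ 0) (hB : B ≠ 0) (hC : C ≠ 0)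
    (hQ2 : A ^ 2 * y ^ 2 - 1 ≠ 0) :
    (A ^ 2 - y ^ 2) * (A ^ 2 - 1) * (A ^ 2 * y ^ 2 - B ^ 2)
        / (A ^ 2 * y * B * (A ^ 2 * y ^ 2 - 1))
      + (A ^ 2 - y ^ 2) * (A ^ 2 - 1) * (A ^ 2 * y ^ 2 - C ^ 2)
          / (A ^ 2 * y * C * (A ^ 2 * y ^ 2 - 1)) * (B * C)
      = (A ^ 2 - y ^ 2) * (A ^ 2 - 1) * (A ^ 2 * y ^ 2 - (B * C) ^ 2)
          / (A ^ 2 * y * (B * C) * (A ^ 2 * y ^ 2 - 1)) * C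
        + (A * A / y + y / (A * A) - y - y⁻¹) * B := by
  field_simp
  ring

/-- The key fusion identity for the series coefficients. -/
lemma keyF {x r : ℝ} (hx0 : 0 < x) (hx1 : x < 1) (hr : 1 < r) {i j : ℕ}
    (hi : 1 ≤ i) (hj : 1 ≤ j) (m : ℕ) :
    Fco x r i m + Fco x r j m * x ^ (((i : ℝ) + j) * ((m : ℝ) + 1))
      = Fco x r (i + j) m * x ^ ((j : ℝ) * ((m : ℝ) + 1))
        + Dco x r m * x ^ ((i : ℝ) * ((m : ℝ) + 1)) := by
  have hxne : x ≠ 0 := hx0.ne'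
  have hxinv : 1 < x⁻¹ := (one_lt_inv₀ hx0).mpr hx1
  have hc : x - x⁻¹ ≠ 0 := sub_ne_zero_of_ne (by linarith)
  have ht0 : (0:ℝ) < (m : ℝ) + 1 := by positivity
  obtain ⟨y, hy⟩ : ∃ y : ℝ, y = x ^ ((m : ℝ) + 1) := ⟨_, rfl⟩
  have hy0 : 0 < y := hy ▸ Real.rpow_pos_of_pos hx0 _
  have hy1 : y < 1 := hy ▸ Real.rpow_lt_one hx0.le hx1 ht0
  have hp : ∀ a : ℝ, x ^ (a * ((m : ℝ) + 1)) = y ^ a := by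
    intro a; rw [hy, mul_comm a _, Real.rpow_mul hx0.le]
  have hq : ∀ a : ℝ, qint x (a * ((m : ℝ) + 1)) = (y ^ a - y ^ (-a)) / (x - x⁻¹) := by
    intro a
    rw [qint, show -(a * ((m:ℝ)+1)) = -a * ((m:ℝ)+1) by ring, hp, hp]
  have hqt : qint x ((m : ℝ) + 1) = (y - y⁻¹) / (x - x⁻¹) := by
    rw [qint, Real.rpow_neg hx0.le, hy]
  obtain ⟨A, hA⟩ : ∃ A : ℝ, A = y ^ r := ⟨_, rfl⟩
  obtain ⟨B, hB⟩ : ∃ B : ℝ, B = y ^ (i : ℝ) := ⟨_, rfl⟩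
  obtain ⟨C, hC⟩ : ∃ C : ℝ, C = y ^ (j : ℝ) := ⟨_, rfl⟩
  have hA0 : 0 < A := hA ▸ Real.rpow_pos_of_pos hy0 r
  have hB0 : 0 < B := hB ▸ Real.rpow_pos_of_pos hy0 _
  have hC0 : 0 < C := hC ▸ Real.rpow_pos_of_pos hy0 _
  have hA1 : A < 1 := hA ▸ Real.rpow_lt_one hy0.le hy1 (by linarith)
  have hAy1 : A * y < 1 := by nlinarith
  have e1 : y ^ (r - 1) = A / y := by rw [Real.rpow_sub hy0, Real.rpow_one, hA]
  have e2 : y ^ (-(r - 1)) = y / A := by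
    rw [show -(r - 1) = 1 - r by ring, Real.rpow_sub hy0, Real.rpow_one, hA]
  have e3 : y ^ (-r) = A⁻¹ := by rw [Real.rpow_neg hy0.le, hA]
  have e4 : y ^ (r + 1) = A * y := by rw [Real.rpow_add hy0, Real.rpow_one, hA]
  have e5 : y ^ (-(r + 1)) = (A * y)⁻¹ := by rw [Real.rpow_neg hy0.le, e4]
  have e10 : y ^ (-1 : ℝ) = y⁻¹ := by rw [Real.rpow_neg hy0.le, Real.rpow_one]
  have e8 : y ^ (2 * r - 1) = A * A / y := by
    rw [show 2*r - 1 = r + (r - 1) by ring, Real.rpow_add hy0, e1, hA]; ring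
  have e9 : y ^ (1 - 2 * r) = y / (A * A) := by
    rw [show 1 - 2*r = -(r + (r-1)) by ring, Real.rpow_neg hy0.le,
      Real.rpow_add hy0, e1, hA]
    field_simp
  have hy2 : y ^ 2 - 1 ≠ 0 :=
    sub_ne_zero_of_ne (ne_of_lt (by nlinarith))
  have hQ2 : A ^ 2 * y ^ 2 - 1 ≠ 0 :=
    sub_ne_zero_of_ne (ne_of_lt (by nlinarith [mul_pos hA0 hy0]))
  -- closed form for Fco
  have hFk : ∀ (k : ℕ), 1 ≤ k → Fco x r k m
      = (A ^ 2 - y ^ 2) * (A ^ 2 - 1) * (A ^ 2 * y ^ 2 - (y ^ (k:ℝ)) ^ 2)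
          / (A ^ 2 * y * (y ^ (k:ℝ)) * (A ^ 2 * y ^ 2 - 1)) := by
    intro k hk
    have hk' : (1:ℝ) ≤ (k:ℝ) := by exact_mod_cast hk
    have hS0 : (0:ℝ) < y ^ (k:ℝ) := Real.rpow_pos_of_pos hy0 _
    have e6 : y ^ (r + 1 - (k:ℝ)) = A * y / y ^ (k:ℝ) := by
      rw [Real.rpow_sub hy0, e4]
    have e7 : y ^ (-(r + 1 - (k:ℝ))) = y ^ (k:ℝ) / (A * y) := by
      rw [show -(r + 1 - (k:ℝ)) = (k:ℝ) - (r+1) by ring, Real.rpow_sub hy0, e4]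
    simp only [Fco, min_eq_left hk', max_eq_right hk', hq, hqt, Real.rpow_one]
    rw [e1, e2, e3, e4, e5, e6, e7, e10, ← hA]
    exact ffL1 y A (y ^ (k:ℝ)) (x - x⁻¹) hy0.ne' hA0.ne' hS0.ne' hc hy2 hQ2
  have hij : (1:ℕ) ≤ i + j := le_trans hi (Nat.le_add_right i j)
  rw [hFk i hi, hFk j hj, hFk (i+j) hij]
  have eBC : y ^ ((i + j : ℕ) : ℝ) = y ^ (i:ℝ) * y ^ (j:ℝ) := by
    push_cast; rw [Real.rpow_add hy0]
  rw [eBC, ← hB, ← hC]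
  simp only [Dco]
  rw [hp ((i:ℝ) + j), hp (j:ℝ), hp (i:ℝ), hp (2*r-1), hp (1-2*r), hp (1:ℝ), hp (-1:ℝ),
    Real.rpow_add hy0, ← hB, ← hC, e8, e9, e10, Real.rpow_one]
  exact ffL2 y A B C hy0.ne' hA0.ne' hB0.ne' hC0.ne' hQ2

lemma qint_pos {x : ℝ} (hx0 : 0 < x) (hx1 : x < 1) {a : ℝ} (ha : 0 < a) :
    0 < qint x a := by
  have hxinv : 1 < x⁻¹ := (one_lt_inv₀ hx0).mpr hx1
  have h1 : x ^ a < x ^ (-a) :=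
    Real.rpow_lt_rpow_of_exponent_gt hx0 hx1 (by linarith)
  exact div_pos_of_neg_of_neg (by linarith) (by linarith)

lemma qint_abs_le {x : ℝ} (hx0 : 0 < x) (hx1 : x < 1) {a M : ℝ} (hM : |a| ≤ M) :
    |qint x a| ≤ x ^ (-M) / (x⁻¹ - x) := by
  have hxinv : 1 < x⁻¹ := (one_lt_inv₀ hx0).mpr hx1
  have hd : 0 < x⁻¹ - x := by linarith
  have habs : |x - x⁻¹| = x⁻¹ - x := by rw [abs_of_neg (by linarith : x - x⁻¹ < 0)]; ring
  rw [qint, abs_div, habs, div_le_div_iff_of_pos_right hd]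
  have h1 : x ^ a ≤ x ^ (-M) :=
    Real.rpow_le_rpow_of_exponent_ge hx0 hx1.le (by cases abs_cases a <;> linarith)
  have h2 : x ^ (-a) ≤ x ^ (-M) :=
    Real.rpow_le_rpow_of_exponent_ge hx0 hx1.le (by cases abs_cases a <;> linarith)
  have h3 : (0:ℝ) < x ^ a := Real.rpow_pos_of_pos hx0 _
  have h4 : (0:ℝ) < x ^ (-a) := Real.rpow_pos_of_pos hx0 _
  rw [abs_sub_le_iff]
  constructor <;> linarith

lemma qint_ge {x : ℝ} (hx0 : 0 < x) (hx1 : x < 1) {a : ℝ} (ha : 1 ≤ a) :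
    x ^ (1 - a) ≤ qint x a := by
  have hxinv : 1 < x⁻¹ := (one_lt_inv₀ hx0).mpr hx1
  have hd : 0 < x⁻¹ - x := by linarith
  have hqr : qint x a = (x ^ (-a) - x ^ a) / (x⁻¹ - x) := by
    rw [qint, ← neg_sub (x ^ (-a)), ← neg_sub x⁻¹, neg_div_neg_eq]
  rw [hqr, le_div_iff₀ hd]
  have h1 : x ^ (1 - a) * x⁻¹ = x ^ (-a) := by
    rw [← Real.rpow_neg_one x, ← Real.rpow_add hx0, show (1:ℝ) - a + -1 = -a by ring]
  have h2 : x ^ (1 - a) * x = x ^ (2 - a) := by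
    nth_rewrite 2 [← Real.rpow_one x]
    rw [← Real.rpow_add hx0, show (1:ℝ) - a + 1 = 2 - a by ring]
  have h3 : x ^ a ≤ x ^ (2 - a) :=
    Real.rpow_le_rpow_of_exponent_ge hx0 hx1.le (by linarith)
  calc x ^ (1-a) * (x⁻¹ - x) = x ^ (1-a) * x⁻¹ - x ^ (1-a) * x := by ring
    _ = x ^ (-a) - x ^ (2-a) := by rw [h1, h2]
    _ ≤ x ^ (-a) - x ^ a := by linarith

lemma Fco_bound {x r : ℝ} (hx0 : 0 < x) (hx1 : x < 1) (hr : 1 < r) {k : ℕ}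
    (hk : 1 ≤ k) (m : ℕ) :
    |Fco x r k m| ≤ x ^ (-2 : ℝ) / (x⁻¹ - x) ^ 2
      * (x ^ (-(3 * r + 2 + 4 * (k:ℝ)))) ^ (m + 1) := by
  have hxinv : 1 < x⁻¹ := (one_lt_inv₀ hx0).mpr hx1
  have hd : 0 < x⁻¹ - x := by linarith
  have hk' : (1:ℝ) ≤ (k:ℝ) := by exact_mod_cast hk
  have ht1 : (1:ℝ) ≤ (m : ℝ) + 1 := by
    have := (Nat.cast_nonneg m : (0:ℝ) ≤ m); linarith
  have ht0 : (0:ℝ) < (m : ℝ) + 1 := by positivity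
  have hM0 : (0:ℝ) < (r + 1 + (k:ℝ)) * ((m:ℝ) + 1) := by nlinarith
  -- numerator bounds
  have hb1 : |qint x ((r - 1) * ((m:ℝ) + 1))|
      ≤ x ^ (-((r + 1 + (k:ℝ)) * ((m:ℝ) + 1))) / (x⁻¹ - x) := by
    apply qint_abs_le hx0 hx1
    rw [abs_of_nonneg (by nlinarith)]
    nlinarith
  have hb2 : |qint x (r * ((m:ℝ) + 1))|
      ≤ x ^ (-((r + 1 + (k:ℝ)) * ((m:ℝ) + 1))) / (x⁻¹ - x) := by
    apply qint_abs_le hx0 hx1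
    rw [abs_of_nonneg (by nlinarith)]
    nlinarith
  have hb3 : |qint x ((1:ℝ) * ((m:ℝ) + 1))|
      ≤ x ^ (-((r + 1 + (k:ℝ)) * ((m:ℝ) + 1))) / (x⁻¹ - x) := by
    apply qint_abs_le hx0 hx1
    rw [abs_of_nonneg (by nlinarith)]
    nlinarith
  have hb4 : |qint x ((r + 1 - (k:ℝ)) * ((m:ℝ) + 1))|
      ≤ x ^ (-((r + 1 + (k:ℝ)) * ((m:ℝ) + 1))) / (x⁻¹ - x) := by
    apply qint_abs_le hx0 hx1
    rw [abs_mul, abs_of_nonneg ht0.le]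
    have : |r + 1 - (k:ℝ)| ≤ r + 1 + (k:ℝ) := by
      rw [abs_le]; constructor <;> nlinarith
    nlinarith
  have hU0 : (0:ℝ) ≤ x ^ (-((r + 1 + (k:ℝ)) * ((m:ℝ) + 1))) / (x⁻¹ - x) := by positivity
  -- denominator bounds
  have hg1 : x ^ (1 - ((m:ℝ) + 1)) ≤ qint x ((m:ℝ) + 1) := qint_ge hx0 hx1 ht1
  have hg2 : x ^ (1 - (r + 1) * ((m:ℝ) + 1)) ≤ qint x ((r + 1) * ((m:ℝ) + 1)) :=
    qint_ge hx0 hx1 (by nlinarith)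
  have hq1pos : 0 < qint x ((m:ℝ) + 1) := qint_pos hx0 hx1 ht0
  have hq2pos : 0 < qint x ((r + 1) * ((m:ℝ) + 1)) := qint_pos hx0 hx1 (by nlinarith)
  have hXpos : (0:ℝ) < x ^ (1 - ((m:ℝ) + 1)) * x ^ (1 - (r + 1) * ((m:ℝ) + 1)) := by
    positivity
  have hden : x ^ (1 - ((m:ℝ) + 1)) * x ^ (1 - (r + 1) * ((m:ℝ) + 1))
      ≤ qint x ((m:ℝ) + 1) * qint x ((r + 1) * ((m:ℝ) + 1)) :=
    mul_le_mul hg1 hg2 (by positivity) hq1pos.le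
  have hnum : |qint x ((r - 1) * ((m:ℝ) + 1)) * qint x (r * ((m:ℝ) + 1))
        * qint x ((1:ℝ) * ((m:ℝ) + 1)) * qint x ((r + 1 - (k:ℝ)) * ((m:ℝ) + 1))|
      ≤ (x ^ (-((r + 1 + (k:ℝ)) * ((m:ℝ) + 1))) / (x⁻¹ - x)) ^ 4 := by
    rw [abs_mul, abs_mul, abs_mul]
    calc |qint x ((r - 1) * ((m:ℝ) + 1))| * |qint x (r * ((m:ℝ) + 1))|
          * |qint x ((1:ℝ) * ((m:ℝ) + 1))| * |qint x ((r + 1 - (k:ℝ)) * ((m:ℝ) + 1))|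
        ≤ (x ^ (-((r + 1 + (k:ℝ)) * ((m:ℝ) + 1))) / (x⁻¹ - x))
          * (x ^ (-((r + 1 + (k:ℝ)) * ((m:ℝ) + 1))) / (x⁻¹ - x))
          * (x ^ (-((r + 1 + (k:ℝ)) * ((m:ℝ) + 1))) / (x⁻¹ - x))
          * (x ^ (-((r + 1 + (k:ℝ)) * ((m:ℝ) + 1))) / (x⁻¹ - x)) := by
          exact mul_le_mul (mul_le_mul (mul_le_mul hb1 hb2 (abs_nonneg _) hU0) hb3
            (abs_nonneg _) (by positivity)) hb4 (abs_nonneg _) (by positivity)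
      _ = (x ^ (-((r + 1 + (k:ℝ)) * ((m:ℝ) + 1))) / (x⁻¹ - x)) ^ 4 := by ring
  -- the exponent bookkeeping identity
  have hE : (x ^ (-((r + 1 + (k:ℝ)) * ((m:ℝ) + 1)))) ^ (4:ℕ)
      = x ^ (-2 : ℝ) * (x ^ (-(3 * r + 2 + 4 * (k:ℝ)))) ^ (m + 1)
        * (x ^ (1 - ((m:ℝ) + 1)) * x ^ (1 - (r + 1) * ((m:ℝ) + 1))) := by
    rw [← Real.rpow_natCast (x ^ (-((r + 1 + (k:ℝ)) * ((m:ℝ) + 1)))) 4,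
      ← Real.rpow_mul hx0.le,
      ← Real.rpow_natCast (x ^ (-(3 * r + 2 + 4 * (k:ℝ)))) (m + 1),
      ← Real.rpow_mul hx0.le, ← Real.rpow_add hx0, ← Real.rpow_add hx0,
      ← Real.rpow_add hx0]
    congr 1
    push_cast
    ring
  have hsq : (x - x⁻¹) ^ 2 = (x⁻¹ - x) ^ 2 := by ring
  calc |Fco x r k m|
      = |qint x ((r - 1) * ((m:ℝ) + 1)) * qint x (r * ((m:ℝ) + 1))
          * qint x ((1:ℝ) * ((m:ℝ) + 1)) * qint x ((r + 1 - (k:ℝ)) * ((m:ℝ) + 1))|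
        / (qint x ((m:ℝ) + 1) * qint x ((r + 1) * ((m:ℝ) + 1))) * (x⁻¹ - x) ^ 2 := by
        simp only [Fco, min_eq_left hk', max_eq_right hk']
        rw [abs_mul, abs_div, abs_of_pos (mul_pos hq1pos hq2pos), ← hsq, abs_pow,
          sq_abs]
    _ ≤ (x ^ (-((r + 1 + (k:ℝ)) * ((m:ℝ) + 1))) / (x⁻¹ - x)) ^ 4
        / (x ^ (1 - ((m:ℝ) + 1)) * x ^ (1 - (r + 1) * ((m:ℝ) + 1))) * (x⁻¹ - x) ^ 2 := by
        apply mul_le_mul_of_nonneg_right _ (by positivity)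
        exact div_le_div₀ (by positivity) hnum hXpos hden
    _ = x ^ (-2 : ℝ) / (x⁻¹ - x) ^ 2 * (x ^ (-(3 * r + 2 + 4 * (k:ℝ)))) ^ (m + 1) := by
        have habstract : ∀ P Q R X dd : ℝ, dd ≠ 0 → X ≠ 0 → P ^ (4:ℕ) = Q * R * X →
            (P / dd) ^ 4 / X * dd ^ 2 = Q / dd ^ 2 * R := by
          intro P Q R X dd hdd hX hPQ
          rw [div_pow, hPQ]
          field_simp
        exact habstract _ _ _ _ _ hd.ne' hXpos.ne' hE

/-- Summability of the generic term. -/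
lemma summable_term {x r : ℝ} (hx0 : 0 < x) (hx1 : x < 1) (hr : 1 < r) {k : ℕ}
    (hk : 1 ≤ k) {w : ℂ} (hw : ‖w‖ * x ^ (-(3 * r + 2 + 4 * (k:ℝ))) < 1) :
    Summable (fun m : ℕ => ((Fco x r k m : ℝ) : ℂ) * w ^ (m + 1) / ((m : ℂ) + 1)) := by
  have hxinv : 1 < x⁻¹ := (one_lt_inv₀ hx0).mpr hx1
  have hd : 0 < x⁻¹ - x := by linarith
  have hρ : (0:ℝ) < x ^ (-(3 * r + 2 + 4 * (k:ℝ))) := Real.rpow_pos_of_pos hx0 _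
  have hq0 : (0:ℝ) ≤ ‖w‖ * x ^ (-(3 * r + 2 + 4 * (k:ℝ))) := by positivity
  set K : ℝ := x ^ (-2 : ℝ) / (x⁻¹ - x) ^ 2 with hK
  have hK0 : 0 ≤ K := by positivity
  apply Summable.of_norm_bounded
    (g := fun m : ℕ => K * (‖w‖ * x ^ (-(3 * r + 2 + 4 * (k:ℝ)))) ^ (m + 1))
  · have h := (summable_geometric_of_lt_one hq0 hw).mul_left
      (K * (‖w‖ * x ^ (-(3 * r + 2 + 4 * (k:ℝ)))))
    exact h.congr (fun m => by rw [pow_succ]; ring)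
  · intro m
    have hnm : (1:ℝ) ≤ ‖(m : ℂ) + 1‖ := by
      rw [show ((m:ℂ) + 1) = ((m + 1 : ℕ) : ℂ) by push_cast; ring, Complex.norm_natCast]
      exact_mod_cast Nat.one_le_iff_ne_zero.mpr (Nat.succ_ne_zero m)
    calc ‖((Fco x r k m : ℝ) : ℂ) * w ^ (m + 1) / ((m : ℂ) + 1)‖
        = |Fco x r k m| * ‖w‖ ^ (m + 1) / ‖(m : ℂ) + 1‖ := by
          rw [norm_div, norm_mul, norm_pow, Complex.norm_real, Real.norm_eq_abs]
      _ ≤ |Fco x r k m| * ‖w‖ ^ (m + 1) := by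
          apply div_le_self (by positivity) hnm
      _ ≤ K * (x ^ (-(3 * r + 2 + 4 * (k:ℝ)))) ^ (m + 1) * ‖w‖ ^ (m + 1) := by
          apply mul_le_mul_of_nonneg_right (Fco_bound hx0 hx1 hr hk m) (by positivity)
      _ = K * (‖w‖ * x ^ (-(3 * r + 2 + 4 * (k:ℝ)))) ^ (m + 1) := by
          rw [mul_pow]; ring

/-- Shifted Taylor series of `-log(1-u)`. -/
lemma neglog_shift {u : ℂ} (hu : ‖u‖ < 1) :
    HasSum (fun m : ℕ => u ^ (m + 1) / ((m : ℂ) + 1)) (-Complex.log (1 - u)) := by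
  have h := Complex.hasSum_taylorSeries_neg_log hu
  have h1 : HasSum (fun n : ℕ => u ^ (n + 1) / ((n + 1 : ℕ) : ℂ)) (-Complex.log (1 - u)) := by
    apply (hasSum_nat_add_iff (f := fun n : ℕ => u ^ n / (n : ℂ)) 1).mpr
    simpa using h
  have h2 : (fun n : ℕ => u ^ (n + 1) / ((n + 1 : ℕ) : ℂ))
      = fun m : ℕ => u ^ (m + 1) / ((m : ℂ) + 1) := by
    funext n; push_cast; ring
  rwa [h2] at h1

lemma ff_one (x r : ℝ) (k : ℕ) (w : ℂ) :
    ff x r 1 k w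
      = Complex.exp (-∑' m : ℕ, ((Fco x r k m : ℝ) : ℂ) * w ^ (m + 1) / ((m : ℂ) + 1)) := by
  simp only [ff, Fco, Nat.cast_one]

/-- Fusion relation `f_{1,i}(z) f_{1,j}(x^{i+j} z) = f_{1,i+j}(x^j z) Δ_1(x^i z)` for `i,j ≥ 1`. -/
theorem f_fusion_two (x : ℝ) (hx0 : 0 < x) (hx1 : x < 1) (r : ℝ) (hr : 1 < r)
    (i j : ℕ) (hi : 1 ≤ i) (hj : 1 ≤ j) :
    ∃ ε > 0, ∀ z : ℂ, ‖z‖ < ε →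
      ff x r 1 i z * ff x r 1 j (((x ^ (i + j) : ℝ) : ℂ) * z)
        = ff x r 1 (i + j) (((x ^ j : ℝ) : ℂ) * z) * Dlt x r 1 (((x ^ i : ℝ) : ℂ) * z) := by
  have hxinv : 1 < x⁻¹ := (one_lt_inv₀ hx0).mpr hx1
  refine ⟨x ^ (3 * r + 3 + 4 * ((i:ℝ) + (j:ℝ))), Real.rpow_pos_of_pos hx0 _, ?_⟩
  intro z hz
  have hij : (1:ℕ) ≤ i + j := le_trans hi (Nat.le_add_right i j)
  -- norm controls
  have hcov : ∀ (k : ℕ) (w : ℂ), (k:ℝ) ≤ (i:ℝ) + (j:ℝ) → ‖w‖ ≤ ‖z‖ →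
      ‖w‖ * x ^ (-(3 * r + 2 + 4 * (k:ℝ))) < 1 := by
    intro k w hkij hwz
    have hρ : (0:ℝ) < x ^ (-(3 * r + 2 + 4 * (k:ℝ))) := Real.rpow_pos_of_pos hx0 _
    calc ‖w‖ * x ^ (-(3 * r + 2 + 4 * (k:ℝ)))
        ≤ ‖z‖ * x ^ (-(3 * r + 2 + 4 * (k:ℝ))) := mul_le_mul_of_nonneg_right hwz hρ.le
      _ < x ^ (3 * r + 3 + 4 * ((i:ℝ) + (j:ℝ))) * x ^ (-(3 * r + 2 + 4 * (k:ℝ))) :=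
          mul_lt_mul_of_pos_right hz hρ
      _ = x ^ (3 * r + 3 + 4 * ((i:ℝ) + (j:ℝ)) + -(3 * r + 2 + 4 * (k:ℝ))) :=
          (Real.rpow_add hx0 _ _).symm
      _ ≤ 1 := Real.rpow_le_one hx0.le hx1.le (by linarith)
  have hmul_le : ∀ n : ℕ, ‖((x ^ n : ℝ) : ℂ) * z‖ ≤ ‖z‖ := by
    intro n
    rw [norm_mul, Complex.norm_real, Real.norm_eq_abs, abs_of_pos (pow_pos hx0 n)]
    calc (x:ℝ) ^ n * ‖z‖ ≤ 1 * ‖z‖ :=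
        mul_le_mul_of_nonneg_right (pow_le_one₀ hx0.le hx1.le) (norm_nonneg z)
      _ = ‖z‖ := one_mul _
  -- summability of the three f-series
  have hS1 : Summable (fun m : ℕ => ((Fco x r i m : ℝ) : ℂ) * z ^ (m + 1) / ((m : ℂ) + 1)) :=
    summable_term hx0 hx1 hr hi
      (hcov i z (le_add_of_nonneg_right (Nat.cast_nonneg j)) le_rfl)
  have hS2 : Summable (fun m : ℕ =>
      ((Fco x r j m : ℝ) : ℂ) * (((x ^ (i + j) : ℝ) : ℂ) * z) ^ (m + 1) / ((m : ℂ) + 1)) :=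
    summable_term hx0 hx1 hr hj (hcov j _ (le_add_of_nonneg_left (Nat.cast_nonneg i)) (hmul_le (i + j)))
  have hS3 : Summable (fun m : ℕ =>
      ((Fco x r (i + j) m : ℝ) : ℂ) * (((x ^ j : ℝ) : ℂ) * z) ^ (m + 1) / ((m : ℂ) + 1)) :=
    summable_term hx0 hx1 hr hij (hcov (i + j) _ (by push_cast; exact le_rfl) (hmul_le j))
  -- the Δ₁ part
  have hnormlt : ∀ a : ℝ, -(2 * r) ≤ a →
      ‖((x ^ a : ℝ) : ℂ) * (((x ^ i : ℝ) : ℂ) * z)‖ < 1 := by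
    intro a ha
    have hra : (0:ℝ) < x ^ a := Real.rpow_pos_of_pos hx0 _
    have h1 : ‖((x ^ a : ℝ) : ℂ) * (((x ^ i : ℝ) : ℂ) * z)‖ = x ^ a * ((x:ℝ) ^ i * ‖z‖) := by
      rw [norm_mul, norm_mul, Complex.norm_real, Complex.norm_real, Real.norm_eq_abs,
        Real.norm_eq_abs, abs_of_pos hra, abs_of_pos (pow_pos hx0 i)]
    have h2 : x ^ a ≤ x ^ (-(2 * r)) :=
      Real.rpow_le_rpow_of_exponent_ge hx0 hx1.le ha
    have h3 : (x:ℝ) ^ i ≤ 1 := pow_le_one₀ hx0.le hx1.le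
    have h4 : (0:ℝ) < x ^ (-(2 * r)) := Real.rpow_pos_of_pos hx0 _
    calc ‖((x ^ a : ℝ) : ℂ) * (((x ^ i : ℝ) : ℂ) * z)‖
        = x ^ a * ((x:ℝ) ^ i * ‖z‖) := h1
      _ ≤ x ^ a * (1 * ‖z‖) := by
          apply mul_le_mul_of_nonneg_left _ hra.le
          exact mul_le_mul_of_nonneg_right h3 (norm_nonneg z)
      _ = x ^ a * ‖z‖ := by ring
      _ ≤ x ^ (-(2 * r)) * ‖z‖ := mul_le_mul_of_nonneg_right h2 (norm_nonneg z)
      _ < x ^ (-(2 * r)) * x ^ (3 * r + 3 + 4 * ((i:ℝ) + (j:ℝ))) :=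
          mul_lt_mul_of_pos_left hz h4
      _ = x ^ (-(2 * r) + (3 * r + 3 + 4 * ((i:ℝ) + (j:ℝ)))) := (Real.rpow_add hx0 _ _).symm
      _ ≤ 1 := Real.rpow_le_one hx0.le hx1.le
          (by have h5 := (Nat.cast_nonneg i : (0:ℝ) ≤ i)
              have h6 := (Nat.cast_nonneg j : (0:ℝ) ≤ j)
              linarith)
  have hne : ∀ a : ℝ, -(2 * r) ≤ a →
      (1 : ℂ) - ((x ^ a : ℝ) : ℂ) * (((x ^ i : ℝ) : ℂ) * z) ≠ 0 := by
    intro a ha h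
    rw [sub_eq_zero] at h
    have h1 := hnormlt a ha
    rw [← h, norm_one] at h1
    exact lt_irrefl 1 h1
  have hlog : ∀ a : ℝ, -(2 * r) ≤ a →
      HasSum (fun m : ℕ => (((x ^ a : ℝ) : ℂ) * (((x ^ i : ℝ) : ℂ) * z)) ^ (m + 1) / ((m : ℂ) + 1))
        (-Complex.log (1 - ((x ^ a : ℝ) : ℂ) * (((x ^ i : ℝ) : ℂ) * z))) :=
    fun a ha => neglog_shift (hnormlt a ha)
  have ha1 : -(2 * r) ≤ 2 * r - 1 := by linarith
  have ha2 : -(2 * r) ≤ 1 - 2 * r := by linarith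
  have ha3 : -(2 * r) ≤ (1:ℝ) := by linarith
  have ha4 : -(2 * r) ≤ (-1:ℝ) := by linarith
  -- per-index power identity
  have hpC : ∀ (a : ℝ) (m : ℕ), ((x ^ (a * ((m:ℝ) + 1)) : ℝ) : ℂ) = ((x ^ a : ℝ) : ℂ) ^ (m + 1) := by
    intro a m
    rw [← Complex.ofReal_pow]
    congr 1
    rw [← Real.rpow_natCast (x ^ a) (m + 1), ← Real.rpow_mul hx0.le]
    congr 1
    push_cast
    ring
  have hnp : ∀ (n : ℕ) (m : ℕ), ((x ^ n : ℝ) : ℂ) ^ (m + 1)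
      = ((x ^ ((n:ℝ) * ((m:ℝ) + 1)) : ℝ) : ℂ) := by
    intro n m
    rw [← Complex.ofReal_pow]
    congr 1
    rw [← pow_mul, ← Real.rpow_natCast x (n * (m + 1))]
    congr 1
    push_cast
    ring
  -- HasSum for the Δ₁ series
  have hT4 : HasSum (fun m : ℕ => ((Dco x r m : ℝ) : ℂ)
        * (((x ^ i : ℝ) : ℂ) * z) ^ (m + 1) / ((m : ℂ) + 1))
      (-Complex.log (1 - ((x ^ (2 * r - 1) : ℝ) : ℂ) * (((x ^ i : ℝ) : ℂ) * z))
        + -Complex.log (1 - ((x ^ (1 - 2 * r) : ℝ) : ℂ) * (((x ^ i : ℝ) : ℂ) * z))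
        - -Complex.log (1 - ((x ^ (1:ℝ) : ℝ) : ℂ) * (((x ^ i : ℝ) : ℂ) * z))
        - -Complex.log (1 - ((x ^ (-1:ℝ) : ℝ) : ℂ) * (((x ^ i : ℝ) : ℂ) * z))) := by
    have h := (((hlog (2 * r - 1) ha1).add (hlog (1 - 2 * r) ha2)).sub
      (hlog (1:ℝ) ha3)).sub (hlog (-1:ℝ) ha4)
    convert h using 1
    · rfl
    funext m
    simp only [Dco, Complex.ofReal_add, Complex.ofReal_sub, hpC, mul_pow]
    ring
  -- termwise identity
  have heq : ∀ m : ℕ,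
      ((Fco x r i m : ℝ) : ℂ) * z ^ (m + 1) / ((m : ℂ) + 1)
        + ((Fco x r j m : ℝ) : ℂ) * (((x ^ (i + j) : ℝ) : ℂ) * z) ^ (m + 1) / ((m : ℂ) + 1)
      = ((Fco x r (i + j) m : ℝ) : ℂ) * (((x ^ j : ℝ) : ℂ) * z) ^ (m + 1) / ((m : ℂ) + 1)
        + ((Dco x r m : ℝ) : ℂ) * (((x ^ i : ℝ) : ℂ) * z) ^ (m + 1) / ((m : ℂ) + 1) := by
    intro m
    have hk := keyF hx0 hx1 hr hi hj m
    have hcast : ((Fco x r i m + Fco x r j m * x ^ (((i : ℝ) + j) * ((m : ℝ) + 1)) : ℝ) : ℂ)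
        = ((Fco x r (i + j) m * x ^ ((j : ℝ) * ((m : ℝ) + 1))
            + Dco x r m * x ^ ((i : ℝ) * ((m : ℝ) + 1)) : ℝ) : ℂ) := by
      exact_mod_cast congrArg (fun t : ℝ => (t : ℂ)) hk
    have hnpij : ((x ^ (i + j) : ℝ) : ℂ) ^ (m + 1)
        = ((x ^ (((i:ℝ) + (j:ℝ)) * ((m:ℝ) + 1)) : ℝ) : ℂ) := by
      rw [hnp (i + j) m]
      congr 2
      push_cast
      ring
    have hnpj : ((x ^ j : ℝ) : ℂ) ^ (m + 1)
        = ((x ^ ((j:ℝ) * ((m:ℝ) + 1)) : ℝ) : ℂ) := hnp j m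
    have hnpi : ((x ^ i : ℝ) : ℂ) ^ (m + 1)
        = ((x ^ ((i:ℝ) * ((m:ℝ) + 1)) : ℝ) : ℂ) := hnp i m
    calc ((Fco x r i m : ℝ) : ℂ) * z ^ (m + 1) / ((m : ℂ) + 1)
          + ((Fco x r j m : ℝ) : ℂ) * (((x ^ (i + j) : ℝ) : ℂ) * z) ^ (m + 1) / ((m : ℂ) + 1)
        = ((Fco x r i m + Fco x r j m * x ^ (((i : ℝ) + j) * ((m : ℝ) + 1)) : ℝ) : ℂ)
            * z ^ (m + 1) / ((m : ℂ) + 1) := by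
          rw [mul_pow, hnpij]
          push_cast
          ring
      _ = ((Fco x r (i + j) m * x ^ ((j : ℝ) * ((m : ℝ) + 1))
            + Dco x r m * x ^ ((i : ℝ) * ((m : ℝ) + 1)) : ℝ) : ℂ)
            * z ^ (m + 1) / ((m : ℂ) + 1) := by rw [hcast]
      _ = ((Fco x r (i + j) m : ℝ) : ℂ) * (((x ^ j : ℝ) : ℂ) * z) ^ (m + 1) / ((m : ℂ) + 1)
            + ((Dco x r m : ℝ) : ℂ) * (((x ^ i : ℝ) : ℂ) * z) ^ (m + 1) / ((m : ℂ) + 1) := by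
          rw [mul_pow, mul_pow, hnpj, hnpi]
          push_cast
          ring
  -- combine the sums
  have hsum12 : HasSum (fun m : ℕ =>
      ((Fco x r i m : ℝ) : ℂ) * z ^ (m + 1) / ((m : ℂ) + 1)
        + ((Fco x r j m : ℝ) : ℂ) * (((x ^ (i + j) : ℝ) : ℂ) * z) ^ (m + 1) / ((m : ℂ) + 1))
      ((∑' m : ℕ, ((Fco x r i m : ℝ) : ℂ) * z ^ (m + 1) / ((m : ℂ) + 1))
        + ∑' m : ℕ, ((Fco x r j m : ℝ) : ℂ) * (((x ^ (i + j) : ℝ) : ℂ) * z) ^ (m + 1)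
          / ((m : ℂ) + 1)) :=
    hS1.hasSum.add hS2.hasSum
  have hsum34 : HasSum (fun m : ℕ =>
      ((Fco x r i m : ℝ) : ℂ) * z ^ (m + 1) / ((m : ℂ) + 1)
        + ((Fco x r j m : ℝ) : ℂ) * (((x ^ (i + j) : ℝ) : ℂ) * z) ^ (m + 1) / ((m : ℂ) + 1))
      ((∑' m : ℕ, ((Fco x r (i + j) m : ℝ) : ℂ) * (((x ^ j : ℝ) : ℂ) * z) ^ (m + 1)
          / ((m : ℂ) + 1))
        + (-Complex.log (1 - ((x ^ (2 * r - 1) : ℝ) : ℂ) * (((x ^ i : ℝ) : ℂ) * z))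
          + -Complex.log (1 - ((x ^ (1 - 2 * r) : ℝ) : ℂ) * (((x ^ i : ℝ) : ℂ) * z))
          - -Complex.log (1 - ((x ^ (1:ℝ) : ℝ) : ℂ) * (((x ^ i : ℝ) : ℂ) * z))
          - -Complex.log (1 - ((x ^ (-1:ℝ) : ℝ) : ℂ) * (((x ^ i : ℝ) : ℂ) * z)))) := by
    have h := hS3.hasSum.add hT4
    convert h using 1
    funext m
    exact heq m
  have hkey := hsum12.unique hsum34
  -- rewrite Δ₁ as an exponential
  have hDlt : Dlt x r 1 (((x ^ i : ℝ) : ℂ) * z)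
      = Complex.exp (Complex.log (1 - ((x ^ (2 * r - 1) : ℝ) : ℂ) * (((x ^ i : ℝ) : ℂ) * z))
        + Complex.log (1 - ((x ^ (1 - 2 * r) : ℝ) : ℂ) * (((x ^ i : ℝ) : ℂ) * z))
        - (Complex.log (1 - ((x ^ (1:ℝ) : ℝ) : ℂ) * (((x ^ i : ℝ) : ℂ) * z))
          + Complex.log (1 - ((x ^ (-1:ℝ) : ℝ) : ℂ) * (((x ^ i : ℝ) : ℂ) * z)))) := by
    rw [Complex.exp_sub, Complex.exp_add, Complex.exp_add,
      Complex.exp_log (hne (2 * r - 1) ha1), Complex.exp_log (hne (1 - 2 * r) ha2),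
      Complex.exp_log (hne (1:ℝ) ha3), Complex.exp_log (hne (-1:ℝ) ha4)]
    simp only [Dlt, Nat.cast_one]
  -- final assembly
  rw [ff_one, ff_one, ff_one, ← Complex.exp_add, hDlt, ← Complex.exp_add]
  congr 1
  rw [show (Complex.log (1 - ((x ^ (2 * r - 1) : ℝ) : ℂ) * (((x ^ i : ℝ) : ℂ) * z))
        + Complex.log (1 - ((x ^ (1 - 2 * r) : ℝ) : ℂ) * (((x ^ i : ℝ) : ℂ) * z))
        - (Complex.log (1 - ((x ^ (1:ℝ) : ℝ) : ℂ) * (((x ^ i : ℝ) : ℂ) * z))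
          + Complex.log (1 - ((x ^ (-1:ℝ) : ℝ) : ℂ) * (((x ^ i : ℝ) : ℂ) * z))))
      = -(-Complex.log (1 - ((x ^ (2 * r - 1) : ℝ) : ℂ) * (((x ^ i : ℝ) : ℂ) * z))
          + -Complex.log (1 - ((x ^ (1 - 2 * r) : ℝ) : ℂ) * (((x ^ i : ℝ) : ℂ) * z))
          - -Complex.log (1 - ((x ^ (1:ℝ) : ℝ) : ℂ) * (((x ^ i : ℝ) : ℂ) * z))
          - -Complex.log (1 - ((x ^ (-1:ℝ) : ℝ) : ℂ) * (((x ^ i : ℝ) : ℂ) * z))) by ring]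
  rw [← neg_add, ← neg_add]
  rw [hkey]
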